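/- Let σᵢ* = r·σⱼ* with r > 1 and suppose two solutions of the logistic ODE σ' = σ(σ* - σ) with common initialization σ₀ ∈ (0, σⱼ*) are (s,f)-incremental for s ∈ (0,1/4), f ∈ (3/4,1). Then σ₀ ≤ s·σⱼ*·(s/(rf))^{(1-s)/(r-1)}. -/

import Mathlib

open Real

set_option maxHeartbeats 1000000

/-- Solution identity for the logistic ODE `σ' = σ (c - σ)` with `σ 0 = σ0`. -/
lemma logistic_formula (c σ0 : ℝ)
    (σ : ℝ → ℝ) (hode : ∀ t : ℝ, HasDerivAt σ (σ t * (c - σ t)) t)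
    (hinit : σ 0 = σ0) :
    ∀ t : ℝ, σ t * (c - σ0 + σ0 * Real.exp (c * t)) = c * σ0 * Real.exp (c * t) := by
  have hσcont : Continuous σ := by
    rw [continuous_iff_continuousAt]; exact fun t => (hode t).continuousAt
  have hacont : Continuous fun u : ℝ => c - σ u := continuous_const.sub hσcont
  set A : ℝ → ℝ := fun t => ∫ u in (0:ℝ)..t, (c - σ u) with hAdef
  have hAderiv : ∀ t : ℝ, HasDerivAt A (c - σ t) t := by
    intro t
    exact intervalIntegral.integral_hasDerivAt_right
      (hacont.intervalIntegrable _ _)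
      (hacont.stronglyMeasurable.stronglyMeasurableAtFilter)
      hacont.continuousAt
  have hexp : ∀ t : ℝ, HasDerivAt (fun u : ℝ => Real.exp (c * u)) (Real.exp (c * t) * c) t :=
    fun t => by simpa using ((hasDerivAt_id t).const_mul c).exp
  have hWderiv : ∀ t : ℝ, HasDerivAt
      (fun u => σ u * (c - σ0 + σ0 * Real.exp (c * u)) - c * σ0 * Real.exp (c * u))
      ((c - σ t) * (σ t * (c - σ0 + σ0 * Real.exp (c * t)) - c * σ0 * Real.exp (c * t))) t := by
    intro t
    have h2 := ((hode t).mul ((hasDerivAt_const t (c - σ0)).add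
      ((hexp t).const_mul σ0))).sub ((hexp t).const_mul (c * σ0))
    refine h2.congr_deriv ?_
    simp only [Pi.add_apply, Pi.neg_apply]; ring
  have hgderiv : ∀ t : ℝ, HasDerivAt
      (fun u => (σ u * (c - σ0 + σ0 * Real.exp (c * u)) - c * σ0 * Real.exp (c * u))
        * Real.exp (-A u)) 0 t := by
    intro t
    have h := (hWderiv t).mul ((hAderiv t).neg.exp)
    refine h.congr_deriv ?_
    simp only [Pi.add_apply, Pi.neg_apply]; ring
  have hgdiff : Differentiable ℝ
      fun u => (σ u * (c - σ0 + σ0 * Real.exp (c * u)) - c * σ0 * Real.exp (c * u))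
        * Real.exp (-A u) :=
    fun t => (hgderiv t).differentiableAt
  have hconst := is_const_of_deriv_eq_zero hgdiff (fun x => (hgderiv x).deriv)
  intro t
  have h := hconst t 0
  have hA0 : A 0 = 0 := by simp [hAdef]
  have hW0 : σ 0 * (c - σ0 + σ0 * Real.exp (c * 0)) - c * σ0 * Real.exp (c * 0) = 0 := by
    simp [hinit]; ring
  rw [hA0, hW0, zero_mul] at h
  rcases mul_eq_zero.mp h with h' | h'
  · linarith
  · exact absurd h' (Real.exp_ne_zero _)

theorem stmt_8 (r σjs σis σ0 s f : ℝ)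
    (hr : 1 < r) (hσjs : 0 < σjs) (his : σis = r * σjs)
    (hσ0 : 0 < σ0) (hσ0j : σ0 < σjs)
    (hs : s ∈ Set.Ioo (0 : ℝ) (1/4)) (hf : f ∈ Set.Ioo (3/4 : ℝ) 1)
    (σi σj : ℝ → ℝ)
    (hodei : ∀ t : ℝ, HasDerivAt σi (σi t * (σis - σi t)) t)
    (hodej : ∀ t : ℝ, HasDerivAt σj (σj t * (σjs - σj t)) t)
    (hiniti : σi 0 = σ0) (hinitj : σj 0 = σ0)
    (hinc : ∃ t : ℝ, 0 ≤ t ∧ σj t ≤ s * σjs ∧ f * σis ≤ σi t) :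
    σ0 ≤ s * σjs * (s / (r * f)) ^ ((1 - s) / (r - 1)) := by
  obtain ⟨hs0, hs4⟩ := hs
  obtain ⟨hf3, hf1⟩ := hf
  obtain ⟨t, ht0, hjt, hit⟩ := hinc
  have hσis : 0 < σis := by rw [his]; positivity
  have hσ0i : σ0 < σis := by
    have := mul_pos (sub_pos.mpr hr) hσjs
    rw [his]; nlinarith [this]
  have hr0 : (0:ℝ) < r := by linarith
  have hr1 : (0:ℝ) < r - 1 := by linarith
  have h1s : (0:ℝ) < 1 - s := by linarith
  have h1f : (0:ℝ) < 1 - f := by linarith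
  have hf0 : (0:ℝ) < f := by linarith
  have hjs0 : (0:ℝ) < σjs - σ0 := by linarith
  have his0 : (0:ℝ) < σis - σ0 := by linarith
  -- the two solution formulas at time t
  have hFj := logistic_formula σjs σ0 σj hodej hinitj t
  have hFi := logistic_formula σis σ0 σi hodei hiniti t
  have hEj : (0:ℝ) < Real.exp (σjs * t) := Real.exp_pos _
  have hEi : (0:ℝ) < Real.exp (σis * t) := Real.exp_pos _
  have hDjpos : (0:ℝ) < σjs - σ0 + σ0 * Real.exp (σjs * t) := by positivity
  have hDipos : (0:ℝ) < σis - σ0 + σ0 * Real.exp (σis * t) := by positivity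
  -- inequality (I): (1-s) * (σ0 * exp(σjs t)) ≤ s * (σjs - σ0)
  have hI : (1 - s) * (σ0 * Real.exp (σjs * t)) ≤ s * (σjs - σ0) := by
    have h := mul_le_mul_of_nonneg_right hjt hDjpos.le
    rw [hFj] at h
    have hI' : σjs * ((1 - s) * (σ0 * Real.exp (σjs * t))) ≤ σjs * (s * (σjs - σ0)) := by
      linarith [h]
    exact le_of_mul_le_mul_left hI' hσjs
  -- inequality (II): f * (σis - σ0) ≤ (1-f) * (σ0 * exp(σis t))
  have hII : f * (σis - σ0) ≤ (1 - f) * (σ0 * Real.exp (σis * t)) := by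
    have h := mul_le_mul_of_nonneg_right hit hDipos.le
    rw [hFi] at h
    have hII' : σis * (f * (σis - σ0)) ≤ σis * ((1 - f) * (σ0 * Real.exp (σis * t))) := by
      linarith [h]
    exact le_of_mul_le_mul_left hII' hσis
  set Z : ℝ := s * (σjs - σ0) / ((1 - s) * σ0) with hZdef
  set V : ℝ := f * (σis - σ0) / ((1 - f) * σ0) with hVdef
  have hZpos : 0 < Z := div_pos (mul_pos hs0 hjs0) (mul_pos h1s hσ0)
  have hVpos : 0 < V := div_pos (mul_pos hf0 his0) (mul_pos h1f hσ0)
  set c : ℝ := Real.log (r * f / s) with hcdef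
  set D : ℝ := Real.log Z with hDdef
  set m : ℝ := Real.log (s * σjs / σ0) with hmdef
  -- σjs * t ≤ D
  have hD : σjs * t ≤ D := by
    rw [hDdef, Real.le_log_iff_exp_le hZpos, hZdef, le_div_iff₀ (mul_pos h1s hσ0)]
    linarith [hI]
  -- log V ≤ σis * t
  have hE : Real.log V ≤ σis * t := by
    rw [Real.log_le_iff_le_exp hVpos, hVdef, div_le_iff₀ (mul_pos h1f hσ0)]
    linarith [hII]
  -- log V ≤ r * D
  have key1 : Real.log V ≤ r * D := by
    have hst : σis * t = r * (σjs * t) := by rw [his]; ring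
    have h2 : r * (σjs * t) ≤ r * D := mul_le_mul_of_nonneg_left hD hr0.le
    rw [hst] at hE
    linarith [hE]
  -- c + D ≤ log V
  have key2 : c + D ≤ Real.log V := by
    have hprod : c + D = Real.log ((r * f / s) * Z) := by
      rw [hcdef, hDdef, ← Real.log_mul (by positivity) hZpos.ne']
    have core : r * (1 - f) * (σjs - σ0) ≤ (1 - s) * (r * σjs - σ0) := by
      linarith [mul_nonneg (mul_nonneg hr0.le (by linarith : (0:ℝ) ≤ f - s)) hjs0.le,
        mul_nonneg (mul_nonneg hσ0.le h1s.le) hr1.le]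
    have hineq : (r * f / s) * Z ≤ V := by
      rw [hZdef, hVdef, div_mul_div_comm, div_le_div_iff₀ (by positivity) (by positivity), his]
      linarith [mul_le_mul_of_nonneg_left core (by positivity : (0:ℝ) ≤ f * s * σ0)]
    rw [hprod]
    exact Real.log_le_log (by positivity) hineq
  have hcD : c / (r - 1) ≤ D := by
    rw [div_le_iff₀ hr1]
    linarith [key1, key2]
  -- (1 - s) * D ≤ m
  set q : ℝ := σ0 / (s * σjs) with hqdef
  set w : ℝ := (σjs - σ0) / ((1 - s) * σjs) with hwdef
  have e1 : (1 - s) * σjs * w = σjs - σ0 := by rw [hwdef]; field_simp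
  have e2 : s * σjs * q = σ0 := by rw [hqdef]; field_simp
  have hwpos : 0 < w := by rw [hwdef]; exact div_pos hjs0 (mul_pos h1s hσjs)
  have hWq : Z = (s * σjs / σ0) * w := by rw [hwdef, hZdef]; field_simp
  have hsplit : D = m + Real.log w := by
    rw [hDdef, hWq, Real.log_mul (by positivity) hwpos.ne', hmdef]
  have hexpm : Real.exp (-m) = q := by
    rw [hqdef, hmdef, Real.exp_neg, Real.exp_log (by positivity), inv_div]
  have h1em : 1 - q ≤ m := by
    have h := Real.add_one_le_exp (-m)
    rw [hexpm] at h
    linarith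
  have h2 : (1 - s) * (w - 1) = s * (1 - q) := by
    apply mul_left_cancel₀ hσjs.ne'
    linear_combination e1 + e2
  have hlogWq : (1 - s) * Real.log w ≤ s * m := by
    have h1 := Real.log_le_sub_one_of_pos hwpos
    linarith [h2, mul_le_mul_of_nonneg_left h1 h1s.le, mul_le_mul_of_nonneg_left h1em hs0.le]
  have hm : (1 - s) * D ≤ m := by
    have h3 : (1 - s) * D = (1 - s) * (m + Real.log w) := by rw [hsplit]
    linarith [h3, hlogWq]
  -- conclusion
  have hfinal : (1 - s) * (c / (r - 1)) ≤ m :=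
    le_trans (mul_le_mul_of_nonneg_left hcD h1s.le) hm
  have hrw : σ0 = s * σjs * Real.exp (-m) := by
    rw [hexpm]
    linarith [e2]
  rw [Real.rpow_def_of_pos (by positivity : (0:ℝ) < s / (r * f))]
  have hlogneg : Real.log (s / (r * f)) = -c := by
    rw [hcdef, ← Real.log_inv, inv_div]
  rw [hlogneg, hrw]
  have hle : -m ≤ -c * ((1 - s) / (r - 1)) := by
    have heq : -c * ((1 - s) / (r - 1)) = -((1 - s) * (c / (r - 1))) := by ring
    rw [heq]
    linarith [hfinal]
  exact mul_le_mul_of_nonneg_left (Real.exp_le_exp.mpr hle) (by positivity)
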